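/- Let k > 0 and p > 1 be rationals. Then s = 0, r = 2kp(p+1)/(p²−p+1), t = k(2p−1)(2p²+1)/(p²−p+1)², a = 2p(p+1)/(2p²+1), b = (p+1)²(p−1)/(2p²+1), w₁ = k(2p−1)(2p²+1)/(p²−p+1)², w₂ = k(2p⁴+4p²−2p+1)/(p²−p+1)², w₃ = k(p+1)(p²+1)(2p−1)/(p²−p+1)², w₄ = kp(5p²−2p+2)/(p²−p+1)² satisfy s² + t² = w₁², (s−r)² + t² = w₂², (s/a + bt)² + (at)² = w₃², ((s−r)/a + bt)² + (at)² = w₄², and r + w₁ + w₂ = r/a + w₃ + w₄. -/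

import Mathlib

/-- A second parametric solution (from the point [2]P) of the
weak-metric-equivalence system. -/
theorem stmt12 (k p : ℚ) (hk : 0 < k) (hp : 1 < p) :
    let s : ℚ := 0
    let r : ℚ := 2*k*p*(p+1)/(p^2-p+1)
    let t : ℚ := k*(2*p-1)*(2*p^2+1)/(p^2-p+1)^2
    let a : ℚ := 2*p*(p+1)/(2*p^2+1)
    let b : ℚ := (p+1)^2*(p-1)/(2*p^2+1)
    let w₁ : ℚ := k*(2*p-1)*(2*p^2+1)/(p^2-p+1)^2
    let w₂ : ℚ := k*(2*p^4+4*p^2-2*p+1)/(p^2-p+1)^2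
    let w₃ : ℚ := k*(p+1)*(p^2+1)*(2*p-1)/(p^2-p+1)^2
    let w₄ : ℚ := k*p*(5*p^2-2*p+2)/(p^2-p+1)^2
    s^2 + t^2 = w₁^2 ∧
    (s - r)^2 + t^2 = w₂^2 ∧
    (s/a + b*t)^2 + (a*t)^2 = w₃^2 ∧
    ((s - r)/a + b*t)^2 + (a*t)^2 = w₄^2 ∧
    r + w₁ + w₂ = r/a + w₃ + w₄ := by
  intro s r t a b w₁ w₂ w₃ w₄
  have h1 : (p^2-p+1 : ℚ) ≠ 0 := by nlinarith [sq_nonneg (p-1)]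
  have h2 : (2*p^2+1 : ℚ) ≠ 0 := by positivity
  have h3 : (p : ℚ) ≠ 0 := by linarith
  have h4 : (p+1 : ℚ) ≠ 0 := by linarith
  have h5 : (p*(p-1)+1 : ℚ) ≠ 0 := by nlinarith [sq_nonneg (p-1)]
  refine ⟨by simp only [s, t, w₁]; ring, ?_, ?_, ?_, ?_⟩ <;>
    simp only [s, r, t, a, b, w₁, w₂, w₃, w₄] <;> field_simp <;> ring
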